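/- (Comparison Principle.) Let G = (V, ω, μ) be a locally finite connected weighted graph with D_μ < ∞, Ω ⊆ V a finite subset with nonempty interior Ω°, and T > 0. Suppose u, w : [0,T) × Ω → ℝ are bounded, continuous in t on [0,T) and differentiable in t on (0,T), that M₁ ≤ u(t,x) ≤ M₂ and M₁ ≤ w(t,x) ≤ M₂ for all (t,x) ∈ [0,T) × Ω, and that g is continuously differentiable on [M₁, M₂]. If: (i) ∂_t u − Δ_Ω u − g(u) ≥ ∂_t w − Δ_Ω w − g(w) on (0,T) × Ω°; (ii) u(0,x) ≥ w(0,x) for all x ∈ Ω°; (iii) u(t,x) ≥ w(t,x) for all (t,x) ∈ [0,T) × ∂Ω; then u(t,x) ≥ w(t,x) for all (t,x) ∈ [0,T) × Ω. -/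

import Mathlib

open Set

/-- The μ-Laplacian on a weighted graph; for `x` in the interior of a finite set `Ω`
(whose neighbours all lie in `Ω`) this is the Dirichlet Laplacian `Δ_Ω`. -/
noncomputable def graphLap {V : Type*} (ω : V → V → ℝ) (μ : V → ℝ)
    (h : V → ℝ) (x : V) : ℝ :=
  (∑' y, ω x y * (h y - h x)) / μ x

open Classical in
/-- The boundary `∂Ω = {x ∈ Ω : ∃ y ∉ Ω, y ~ x}` of a finite subset of a weighted graph. -/
noncomputable def graphBoundary {V : Type*} (ω : V → V → ℝ) (Ω : Finset V) : Finset V :=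
  Ω.filter fun x => ∃ y ∉ Ω, 0 < ω x y

open Classical in
/-- The interior `Ω° = Ω \ ∂Ω` of a finite subset of a weighted graph: the points of `Ω`
all of whose neighbours lie in `Ω`. -/
noncomputable def graphInterior {V : Type*} (ω : V → V → ℝ) (Ω : Finset V) : Finset V :=
  Ω.filter fun x => ∀ y, 0 < ω x y → y ∈ Ω

open Classical in
lemma mem_graphInterior_aux {V : Type*} {ω : V → V → ℝ} {Ω : Finset V} {x : V} :
    x ∈ graphInterior ω Ω ↔ x ∈ Ω ∧ ∀ y, 0 < ω x y → y ∈ Ω := Finset.mem_filter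

open Classical in
lemma mem_graphBoundary_aux {V : Type*} {ω : V → V → ℝ} {Ω : Finset V} {x : V} :
    x ∈ graphBoundary ω Ω ↔ x ∈ Ω ∧ ∃ y ∉ Ω, 0 < ω x y := Finset.mem_filter

/-- Comparison principle: if `∂ₜu − Δ_Ω u − g(u) ≥ ∂ₜw − Δ_Ω w − g(w)` on `(0,T) × Ω°`,
`u(0,·) ≥ w(0,·)` on `Ω°`, `u ≥ w` on `[0,T) × ∂Ω`, with `M₁ ≤ u, w ≤ M₂` and
`g ∈ C¹[M₁,M₂]`, then `u ≥ w` on `[0,T) × Ω`. -/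
theorem comparison_principle
    {V : Type*} [Countable V] (ω : V → V → ℝ) (μ : V → ℝ)
    (hsymm : ∀ x y, ω x y = ω y x)
    (hwnn : ∀ x y, 0 ≤ ω x y)
    (hμpos : ∀ x, 0 < μ x)
    (hlocfin : ∀ x, {y | 0 < ω x y}.Finite)
    (hdeg : ∀ x, ∃ y, 0 < ω x y)
    (hconn : ∀ x y, Relation.ReflTransGen (fun a b => 0 < ω a b) x y)
    (Dμ : ℝ) (hDμ : ∀ x, (∑' y, ω x y) / μ x ≤ Dμ)
    (Ω : Finset V) (hΩne : Ω.Nonempty) (hΩint : (graphInterior ω Ω).Nonempty)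
    (T : ℝ) (hT : 0 < T)
    (M₁ M₂ : ℝ) (g : ℝ → ℝ) (hg : ContDiffOn ℝ 1 g (Icc M₁ M₂))
    (u u' w w' : ℝ → V → ℝ)
    (hu_rng : ∀ t ∈ Ico (0:ℝ) T, ∀ x ∈ Ω, u t x ∈ Icc M₁ M₂)
    (hw_rng : ∀ t ∈ Ico (0:ℝ) T, ∀ x ∈ Ω, w t x ∈ Icc M₁ M₂)
    (hu_cont : ∀ x ∈ Ω, ContinuousOn (fun t => u t x) (Ico (0:ℝ) T))
    (hw_cont : ∀ x ∈ Ω, ContinuousOn (fun t => w t x) (Ico (0:ℝ) T))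
    (hu_deriv : ∀ x ∈ Ω, ∀ t ∈ Ioo (0:ℝ) T, HasDerivAt (fun s => u s x) (u' t x) t)
    (hw_deriv : ∀ x ∈ Ω, ∀ t ∈ Ioo (0:ℝ) T, HasDerivAt (fun s => w s x) (w' t x) t)
    (hineq : ∀ t ∈ Ioo (0:ℝ) T, ∀ x ∈ graphInterior ω Ω,
      w' t x - graphLap ω μ (w t) x - g (w t x) ≤
        u' t x - graphLap ω μ (u t) x - g (u t x))
    (hinit : ∀ x ∈ graphInterior ω Ω, w 0 x ≤ u 0 x)
    (hbdry : ∀ t ∈ Ico (0:ℝ) T, ∀ x ∈ graphBoundary ω Ω, w t x ≤ u t x) :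
    ∀ t ∈ Ico (0:ℝ) T, ∀ x ∈ Ω, w t x ≤ u t x := by
  obtain ⟨x₀, hx₀⟩ := hΩne
  have hΩne : Ω.Nonempty := ⟨x₀, hx₀⟩
  have hM : M₁ ≤ M₂ := by
    have h := hu_rng 0 ⟨le_refl 0, hT⟩ x₀ hx₀
    exact h.1.trans h.2
  -- Lipschitz constant for g on [M₁, M₂]
  obtain ⟨L, hLnn, hLip⟩ : ∃ L : ℝ, 0 ≤ L ∧ ∀ a ∈ Icc M₁ M₂, ∀ b ∈ Icc M₁ M₂,
      |g a - g b| ≤ L * |a - b| := by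
    rcases eq_or_lt_of_le hM with h | h
    · refine ⟨0, le_refl 0, ?_⟩
      intro a ha b hb
      subst h
      have ha' : a = M₁ := le_antisymm ha.2 ha.1
      have hb' : b = M₁ := le_antisymm hb.2 hb.1
      simp [ha', hb']
    · have hd : ContinuousOn (derivWithin g (Icc M₁ M₂)) (Icc M₁ M₂) :=
        hg.continuousOn_derivWithin (uniqueDiffOn_Icc h) le_rfl
      obtain ⟨C, hC⟩ := isCompact_Icc.exists_bound_of_continuousOn hd
      have hC0 : 0 ≤ C := le_trans (norm_nonneg _) (hC M₁ ⟨le_refl _, hM⟩)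
      have hlip : LipschitzOnWith C.toNNReal g (Icc M₁ M₂) := by
        refine (convex_Icc M₁ M₂).lipschitzOnWith_of_nnnorm_derivWithin_le
          (hg.differentiableOn one_ne_zero) ?_
        intro x hx
        rw [← NNReal.coe_le_coe, coe_nnnorm, Real.coe_toNNReal _ hC0]
        exact hC x hx
      refine ⟨C, hC0, ?_⟩
      intro a ha b hb
      have := hlip.dist_le_mul a ha b hb
      rwa [Real.dist_eq, Real.dist_eq, Real.coe_toNNReal _ hC0] at this
  set v : ℝ → V → ℝ := fun t x => w t x - u t x with hvdef
  set φ : ℝ → ℝ := fun t => Ω.sup' hΩne (fun x => max (v t x) 0) with hφdef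
  have hφ0 : ∀ t, 0 ≤ φ t := by
    intro t
    have h1 := Finset.le_sup' (fun x => max (v t x) 0) hx₀
    exact le_trans (le_max_right _ _) h1
  have hvle : ∀ t, ∀ x ∈ Ω, v t x ≤ φ t := by
    intro t x hx
    have h1 := Finset.le_sup' (fun x => max (v t x) 0) hx
    exact le_trans (le_max_left _ _) h1
  have hφcont : ContinuousOn φ (Ico (0:ℝ) T) := by
    apply ContinuousOn.finset_sup'_apply hΩne
    intro x hx
    exact ((hw_cont x hx).sub (hu_cont x hx)).sup continuousOn_const
  have hdich : ∀ x ∈ Ω, x ∈ graphInterior ω Ω ∨ x ∈ graphBoundary ω Ω := by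
    intro x hx
    by_cases h : ∀ y, 0 < ω x y → y ∈ Ω
    · exact Or.inl (mem_graphInterior_aux.2 ⟨hx, h⟩)
    · push_neg at h
      obtain ⟨y, hy1, hy2⟩ := h
      exact Or.inr (mem_graphBoundary_aux.2 ⟨hx, y, hy2, hy1⟩)
  have hv0 : ∀ x ∈ Ω, v 0 x ≤ 0 := by
    intro x hx
    rcases hdich x hx with h | h
    · exact sub_nonpos.2 (hinit x h)
    · exact sub_nonpos.2 (hbdry 0 ⟨le_refl 0, hT⟩ x h)
  have hφat0 : φ 0 = 0 := by
    refine le_antisymm (Finset.sup'_le _ _ fun x hx => max_le (hv0 x hx) le_rfl) (hφ0 0)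
  -- derivative bound at an interior maximum
  have hkey : ∀ t ∈ Ioo (0:ℝ) T, ∀ x, x ∈ graphInterior ω Ω → v t x = φ t →
      w' t x - u' t x ≤ L * φ t := by
    intro t ht x hxint hxmax
    have hxΩ : x ∈ Ω := (mem_graphInterior_aux.1 hxint).1
    have hnbr : ∀ y, 0 < ω x y → y ∈ Ω := (mem_graphInterior_aux.1 hxint).2
    have htIco : t ∈ Ico (0:ℝ) T := ⟨ht.1.le, ht.2⟩
    have hS := hlocfin x
    have lapeq : ∀ h : V → ℝ,
        (∑' y, ω x y * (h y - h x)) = ∑ y ∈ hS.toFinset, ω x y * (h y - h x) := by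
      intro h
      apply tsum_eq_sum
      intro y hy
      have h0 : ω x y = 0 := le_antisymm (not_lt.1 (by simpa using hy)) (hwnn x y)
      simp [h0]
    have hlap : graphLap ω μ (w t) x - graphLap ω μ (u t) x ≤ 0 := by
      rw [graphLap, graphLap, div_sub_div_same]
      apply div_nonpos_of_nonpos_of_nonneg _ (hμpos x).le
      rw [lapeq, lapeq, ← Finset.sum_sub_distrib]
      apply Finset.sum_nonpos
      intro y hy
      have hωy : 0 < ω x y := by simpa using hy
      have hyΩ : y ∈ Ω := hnbr y hωy
      have hterm : ω x y * (w t y - w t x) - ω x y * (u t y - u t x)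
          = ω x y * (v t y - v t x) := by
        simp only [hvdef]; ring
      rw [hterm]
      apply mul_nonpos_of_nonneg_of_nonpos (hwnn x y)
      have := hvle t y hyΩ
      rw [hxmax] at *
      linarith [hvle t y hyΩ]
    have hgb : g (w t x) - g (u t x) ≤ L * φ t := by
      have hwm := hw_rng t htIco x hxΩ
      have hum := hu_rng t htIco x hxΩ
      have h1 := hLip (w t x) hwm (u t x) hum
      have h2 : w t x - u t x = φ t := hxmax
      calc g (w t x) - g (u t x) ≤ |g (w t x) - g (u t x)| := le_abs_self _
        _ ≤ L * |w t x - u t x| := h1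
        _ = L * φ t := by rw [h2, abs_of_nonneg (hφ0 t)]
    have h3 := hineq t ht x hxint
    linarith
  -- liminf right-slope bound for φ
  have hliminf : ∀ t ∈ Ioo (0:ℝ) T, ∀ r, L * φ t < r →
      ∃ᶠ z in nhdsWithin t (Ioi t), (z - t)⁻¹ * (φ z - φ t) < r := by
    intro t ht r hr
    by_contra hcon
    rw [Filter.not_frequently] at hcon
    have hrpos : 0 < r := lt_of_le_of_lt (mul_nonneg hLnn (hφ0 t)) hr
    have hTz : ∀ᶠ z in nhdsWithin t (Ioi t), z ∈ Ioo t T :=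
      Ioo_mem_nhdsGT ht.2
    -- pigeonhole: some x ∈ Ω attains the max frequently
    have hpig : ∃ x ∈ Ω, ∃ᶠ z in nhdsWithin t (Ioi t),
        z ∈ Ioo t T ∧ φ z = max (v z x) 0 := by
      by_contra hno
      push_neg at hno
      have hev : ∀ᶠ z in nhdsWithin t (Ioi t), ∀ x ∈ Ω,
          ¬(z ∈ Ioo t T ∧ φ z = max (v z x) 0) := by
        rw [Filter.eventually_all_finset]
        intro x hx
        exact (hno x hx).mono fun z hz h => hz h.1 h.2
      obtain ⟨z, hz1, hz2⟩ := (hev.and hTz).exists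
      obtain ⟨x, hx, hxe⟩ := Finset.exists_mem_eq_sup' hΩne (fun x => max (v z x) 0)
      exact hz1 x hx ⟨hz2, hxe⟩
    obtain ⟨x, hxΩ, hfreq⟩ := hpig
    set S : Set ℝ := {z | z ∈ Ioo t T ∧ φ z = max (v z x) 0} with hSdef
    set l : Filter ℝ := nhdsWithin t (Ioi t) ⊓ Filter.principal S with hldef
    have hlne : l.NeBot := Filter.frequently_iff_neBot.1 hfreq
    have hlS : ∀ᶠ z in l, z ∈ S := by
      rw [hldef]
      exact Filter.eventually_inf_principal.2 (Filter.Eventually.of_forall fun z hz => hz)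
    have hlIoi : l ≤ nhdsWithin t (Ioi t) := inf_le_left
    have hidt : Filter.Tendsto (fun z : ℝ => z) l (nhds t) :=
      Filter.tendsto_id.mono_left (hlIoi.trans nhdsWithin_le_nhds)
    -- tendsto within Ico 0 T
    have hIcoT : ∀ᶠ z in l, z ∈ Ico (0:ℝ) T := by
      filter_upwards [hlS] with z hz
      exact ⟨le_trans ht.1.le hz.1.1.le, hz.1.2⟩
    have hidt' : Filter.Tendsto (fun z : ℝ => z) l (nhdsWithin t (Ico (0:ℝ) T)) := by
      rw [tendsto_nhdsWithin_iff]
      exact ⟨hidt, hIcoT⟩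
    have hvx_tendsto : Filter.Tendsto (fun z => v z x) l (nhds (v t x)) := by
      have hc : ContinuousWithinAt (fun s => v s x) (Ico (0:ℝ) T) t :=
        ((hw_cont x hxΩ).sub (hu_cont x hxΩ)) t ⟨ht.1.le, ht.2⟩
      exact hc.tendsto.comp hidt'
    have hφ_tendsto : Filter.Tendsto φ l (nhds (φ t)) :=
      (hφcont t ⟨ht.1.le, ht.2⟩).tendsto.comp hidt'
    have hmax_tendsto : Filter.Tendsto (fun z => max (v z x) 0) l (nhds (max (v t x) 0)) :=
      hvx_tendsto.max tendsto_const_nhds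
    have hxmax : max (v t x) 0 = φ t := by
      refine tendsto_nhds_unique (hmax_tendsto.congr' ?_) hφ_tendsto
      filter_upwards [hlS] with z hz
      exact hz.2.symm
    -- the contradiction inequality on l
    have hslope : ∀ᶠ z in l, φ t + r * (z - t) ≤ max (v z x) 0 ∧ t < z := by
      have h1 : ∀ᶠ z in l, r ≤ (z - t)⁻¹ * (φ z - φ t) :=
        (hcon.filter_mono hlIoi).mono fun z hz => not_lt.1 hz
      have h2 : ∀ᶠ z in l, t < z := hlIoi self_mem_nhdsWithin
      filter_upwards [h1, h2, hlS] with z hz1 hz2 hz3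
      refine ⟨?_, hz2⟩
      have hzt : 0 < z - t := sub_pos.2 hz2
      rw [inv_mul_eq_div, le_div_iff₀ hzt] at hz1
      rw [← hz3.2]
      linarith
    rcases hdich x hxΩ with hint | hbd
    · -- interior case
      rcases lt_or_ge (v t x) 0 with hneg | hpos
      · -- v t x < 0 : φ t = 0, and v z x < 0 eventually
        have hφt : φ t = 0 := by rw [← hxmax, max_eq_right hneg.le]
        have hev : ∀ᶠ z in l, v z x < 0 := hvx_tendsto.eventually (eventually_lt_nhds hneg)
        obtain ⟨z, hz1, hz2⟩ := (hslope.and hev).exists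
        have : max (v z x) 0 = 0 := max_eq_right hz2.le
        rw [this, hφt] at hz1
        nlinarith [hz1.1, sub_pos.2 hz1.2]
      · -- v t x ≥ 0 : φ t = v t x, slope of v at x bounded below by r
        have hφt : φ t = v t x := by rw [← hxmax, max_eq_left hpos]
        have hslope' : ∀ᶠ z in l, r ≤ slope (fun s => v s x) t z := by
          filter_upwards [hslope] with z hz
          have hzt : 0 < z - t := sub_pos.2 hz.2
          have hpos' : 0 < φ t + r * (z - t) := by
            have := hφ0 t; nlinarith
          have hvz : φ t + r * (z - t) ≤ v z x := by
            rcases max_cases (v z x) 0 with ⟨he, _⟩ | ⟨he, _⟩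
            · rw [he] at hz; exact hz.1
            · rw [he] at hz; linarith [hz.1]
          rw [slope_def_field, le_div_iff₀ hzt]
          rw [hφt] at hvz
          linarith
        have hder : HasDerivAt (fun s => v s x) (w' t x - u' t x) t :=
          (hw_deriv x hxΩ t ht).sub (hu_deriv x hxΩ t ht)
        have hsl := hasDerivAt_iff_tendsto_slope.1 hder
        have hl_ne : l ≤ nhdsWithin t {t}ᶜ :=
          hlIoi.trans (nhdsWithin_mono t fun z hz => Set.mem_compl_singleton_iff.2 (ne_of_gt hz))
        have hge : r ≤ w' t x - u' t x := ge_of_tendsto (hsl.mono_left hl_ne) hslope'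
        have hk := hkey t ht x hint hφt.symm
        linarith
    · -- boundary case: v z x ≤ 0 on Ico 0 T
      have hbz : ∀ᶠ z in l, max (v z x) 0 = 0 := by
        filter_upwards [hIcoT] with z hz
        exact max_eq_right (sub_nonpos.2 (hbdry z hz x hbd))
      have hφt : φ t = 0 := by
        rw [← hxmax, max_eq_right (sub_nonpos.2 (hbdry t ⟨ht.1.le, ht.2⟩ x hbd))]
      obtain ⟨z, hz1, hz2⟩ := (hslope.and hbz).exists
      rw [hz2, hφt] at hz1
      nlinarith [hz1.1, sub_pos.2 hz1.2]
  -- Gronwall on [a, t] for 0 < a < t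
  have main : ∀ t ∈ Ioo (0:ℝ) T, ∀ a ∈ Ioo (0:ℝ) t, φ t ≤ φ a * Real.exp (L * (t - a)) := by
    intro t ht a ha
    have hsub : Icc a t ⊆ Ico (0:ℝ) T := fun s hs =>
      ⟨le_trans ha.1.le hs.1, lt_of_le_of_lt hs.2 ht.2⟩
    have hsub2 : Ico a t ⊆ Ioo (0:ℝ) T := fun s hs =>
      ⟨lt_of_lt_of_le ha.1 hs.1, lt_trans hs.2 ht.2⟩
    have H := le_gronwallBound_of_liminf_deriv_right_le (f := φ)
      (f' := fun s => L * φ s) (δ := φ a) (K := L) (ε := 0)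
      (hφcont.mono hsub)
      (fun s hs r hr => hliminf s (hsub2 hs) r hr)
      le_rfl
      (fun s hs => by simp)
    have h2 := H t ⟨ha.2.le, le_refl t⟩
    rwa [gronwallBound_ε0] at h2
  -- let a → 0⁺
  have hφle : ∀ t ∈ Ico (0:ℝ) T, φ t ≤ 0 := by
    intro t ht
    rcases eq_or_lt_of_le ht.1 with h0 | h0
    · rw [← h0]
      exact le_of_eq hφat0
    · have hlim : Filter.Tendsto (fun a => φ a * Real.exp (L * (t - a)))
          (nhdsWithin 0 (Ioi 0)) (nhds (φ 0 * Real.exp (L * t))) := by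
        have hφc : Filter.Tendsto φ (nhdsWithin 0 (Ioi 0)) (nhds (φ 0)) := by
          have h1 := (hφcont 0 ⟨le_refl 0, hT⟩).tendsto
          apply h1.mono_left
          rw [← nhdsWithin_Ioo_eq_nhdsGT hT]
          exact nhdsWithin_mono 0 Ioo_subset_Ico_self
        have hexp : Filter.Tendsto (fun a : ℝ => Real.exp (L * (t - a)))
            (nhdsWithin 0 (Ioi 0)) (nhds (Real.exp (L * t))) := by
          have hc : Continuous (fun a : ℝ => Real.exp (L * (t - a))) :=
            Real.continuous_exp.comp (continuous_const.mul (continuous_const.sub continuous_id))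
          have h2 := (hc.tendsto 0).mono_left (nhdsWithin_le_nhds (s := Ioi (0:ℝ)))
          simpa using h2
        exact hφc.mul hexp
      have hev : ∀ᶠ a in nhdsWithin 0 (Ioi 0), φ t ≤ φ a * Real.exp (L * (t - a)) := by
        filter_upwards [Ioo_mem_nhdsGT h0] with a ha
        exact main t ⟨h0, ht.2⟩ a ha
      have h3 := ge_of_tendsto hlim hev
      rwa [hφat0, zero_mul] at h3
  intro t ht x hx
  exact sub_nonpos.1 (le_trans (hvle t x hx) (hφle t ht))
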